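/- Let G be a finitely generated group. Then G is RE^∀-flat as a group if and only if the word problem of G is recursively enumerable, i.e. for a surjection π : A* → G from the free monoid on a finite generating set A, the language π⁻¹(1) is recursively enumerable (equivalently, G is recursively presented). -/

import Mathlib

open Encodable Part

theorem REPred.compC {α β} [Primcodable α] [Primcodable β] {p : β → Prop} (hp : REPred p)
    {f : α → β} (hf : Computable f) : REPred fun a => p (f a) :=
  Partrec.comp hp hf

theorem REPred.true' {α} [Primcodable α] : REPred fun _ : α => True :=
  ComputablePred.to_re (p := fun _ : α => True) ⟨inferInstance, Computable.const true⟩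

theorem REPred.and' {α} [Primcodable α] {p q : α → Prop} (hp : REPred p) (hq : REPred q) :
    REPred fun a => p a ∧ q a := by
  have h : Partrec fun a =>
      (Part.assert (p a) fun _ => Part.some ()).bind
        (fun _ => Part.assert (q a) fun _ => Part.some ()) :=
    Partrec.bind hp (Partrec.comp hq Computable.fst)
  refine h.dom_re.of_eq fun a => ?_
  simp [Part.dom_iff_mem, Part.mem_bind_iff, Part.mem_assert_iff]

theorem REPred.exists' {α β} [Primcodable α] [Primcodable β] {p : α × β → Prop}
    (hp : REPred p) : REPred fun a => ∃ b, p (a, b) := by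
  unfold REPred Partrec at hp
  obtain ⟨c, hc⟩ := Nat.Partrec.Code.exists_code.1 hp
  -- key: for x : α × β, p x ↔ (Nat.Partrec.Code.eval c (encode x)).Dom
  have key : ∀ x : α × β, p x ↔ (Nat.Partrec.Code.eval c (encode x)).Dom := by
    intro x
    rw [hc]
    simp [Part.dom_iff_mem, Part.mem_bind_iff, Part.mem_map_iff, Part.mem_assert_iff,
      Part.mem_coe, Encodable.encodek]
  set F : α → ℕ → Option Unit := fun a N =>
    (Encodable.decode (α := β) N.unpair.1).bind fun b =>
      (Nat.Partrec.Code.evaln N.unpair.2 c (encode (a, b))).map fun _ => ()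
  have hF : Computable₂ F := by
    have h1 : Primrec₂ F := by
      apply Primrec.option_bind
      · exact Primrec.decode.comp ((Primrec.fst.comp (Primrec.unpair.comp Primrec.snd)))
      · apply Primrec.option_map
        · exact Nat.Partrec.Code.primrec_evaln.comp
            (((Primrec.snd.comp (Primrec.unpair.comp (Primrec.snd.comp Primrec.fst))).pair
              (Primrec.const c)).pair
              (Primrec.encode.comp ((Primrec.fst.comp Primrec.fst).pair Primrec.snd)))
        · exact Primrec.const ()
    exact h1.to_comp
  have h2 : Partrec fun a => Nat.rfindOpt (F a) := Partrec.rfindOpt hF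
  refine h2.dom_re.of_eq fun a => ?_
  rw [Nat.rfindOpt_dom]
  constructor
  · rintro ⟨N, u, hu⟩
    simp only [F, Option.mem_def, Option.bind_eq_some_iff, Option.map_eq_some_iff] at hu
    obtain ⟨b, hb, y, hy, -⟩ := hu
    exact ⟨b, (key (a, b)).2 (Part.dom_iff_mem.2 ⟨y, Nat.Partrec.Code.evaln_complete.2 ⟨_, hy⟩⟩)⟩
  · rintro ⟨b, hb⟩
    have := (key (a, b)).1 hb
    obtain ⟨y, hy⟩ := Part.dom_iff_mem.1 this
    obtain ⟨k, hk⟩ := Nat.Partrec.Code.evaln_complete.1 hy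
    refine ⟨Nat.pair (encode b) k, (), ?_⟩
    simp only [F, Option.mem_def, Nat.unpair_pair, Encodable.encodek, Option.bind_eq_some_iff,
      Option.map_eq_some_iff]
    exact ⟨b, rfl, y, hk, trivial⟩

theorem hom_flatMap {M : Type} [Monoid M] {m k : ℕ} {g : List (Fin m) → M} {h : List (Fin k) → M}
    (hg1 : g [] = 1) (hg2 : ∀ u v, g (u ++ v) = g u * g v)
    (hh1 : h [] = 1) (hh2 : ∀ u v, h (u ++ v) = h u * h v)
    {f : Fin k → List (Fin m)} (hf : ∀ b, h [b] = g (f b)) :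
    ∀ v : List (Fin k), h v = g (v.flatMap f) := by
  intro v
  induction v with
  | nil => simpa using hh1.trans hg1.symm
  | cons b t ih =>
    rw [show (b :: t) = [b] ++ t from rfl, hh2, hf, ih, ← hg2]
    simp [List.flatMap_append]

theorem hom_inv {G : Type} [Group G] {m : ℕ} {g : List (Fin m) → G}
    (hg1 : g [] = 1) (hg2 : ∀ u v, g (u ++ v) = g u * g v)
    {ι : Fin m → List (Fin m)} (hι : ∀ a, g (ι a) = (g [a])⁻¹) :
    ∀ w : List (Fin m), g (w.reverse.flatMap ι) = (g w)⁻¹ := by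
  intro w
  induction w with
  | nil => simp [hg1]
  | cons a t ih =>
    rw [List.reverse_cons, List.flatMap_append, hg2, ih]
    have h2 : g (a :: t) = g [a] * g t := by
      rw [show a :: t = [a] ++ t from rfl, hg2]
    simp [List.flatMap_cons, hι, h2, mul_inv_rev]

theorem computable_flatMap {m k : ℕ} (f : Fin m → List (Fin k)) :
    Computable fun w : List (Fin m) => w.flatMap f :=
  (Primrec.list_flatMap Primrec.id ((Primrec.dom_finite f).comp Primrec.snd).to₂).to_comp

/-!  Common framework: classes of languages over finite alphabets, `C^∀`- and
`C^∃`-subsets of finitely generated monoids and groups, closure properties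
(cone, full semi-AFL), and `C^•`-flatness.  -/

/-- A class of languages: for each finite alphabet `Fin n`, a collection of languages over it. -/
abbrev LangClass : Type := ∀ n : ℕ, Set (Set (List (Fin n)))

/-- `π` is a surjective monoid homomorphism from the free monoid on `Fin n`
(words, under concatenation) onto `M`; i.e. it presents `M` as a monoid generated
by the finite set `Fin n`. -/
structure FreeHomOnto {n : ℕ} (M : Type) [Monoid M] (π : List (Fin n) → M) : Prop where
  map_nil : π [] = 1
  map_append : ∀ u v : List (Fin n), π (u ++ v) = π u * π v
  surjective : Function.Surjective π

/-- `X ⊆ M` is a `C^∀`-subset of `M` w.r.t. the generating map `π`: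
the full preimage `π⁻¹(X)` is a language of the class `C`. -/
def CForall (C : LangClass) {n : ℕ} {M : Type} [Monoid M]
    (π : List (Fin n) → M) (X : Set M) : Prop :=
  {w : List (Fin n) | π w ∈ X} ∈ C n

/-- `X ⊆ M` is a `C^∃`-subset of `M` w.r.t. the generating map `π`:
some language of the class `C` is mapped onto `X` by `π`. -/
def CExists (C : LangClass) {n : ℕ} {M : Type} [Monoid M]
    (π : List (Fin n) → M) (X : Set M) : Prop :=
  ∃ L ∈ C n, π '' L = X

/-- Closure under inverse images of homomorphisms of free monoids on finite alphabets.
Such a homomorphism is determined by its values `f i` on letters, sending `w` to `w.flatMap f`. -/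
def ClosedUnderInvHom (C : LangClass) : Prop :=
  ∀ (m n : ℕ) (f : Fin m → List (Fin n)), ∀ L ∈ C n,
    {w : List (Fin m) | w.flatMap f ∈ L} ∈ C m

/-- Closure under images of homomorphisms of free monoids on finite alphabets. -/
def ClosedUnderHom (C : LangClass) : Prop :=
  ∀ (m n : ℕ) (f : Fin m → List (Fin n)), ∀ L ∈ C m,
    (fun w : List (Fin m) => w.flatMap f) '' L ∈ C n

/-- A language over `Fin n` is regular if it is accepted by a DFA with finitely many states. -/
def IsRegularLang {n : ℕ} (L : Set (List (Fin n))) : Prop :=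
  ∃ (σ : Type) (_ : Fintype σ) (A : DFA (Fin n) σ), ∀ w : List (Fin n), w ∈ A.accepts ↔ w ∈ L

/-- Closure under intersection with regular languages. -/
def ClosedUnderInterReg (C : LangClass) : Prop :=
  ∀ (n : ℕ), ∀ L ∈ C n, ∀ R : Set (List (Fin n)), IsRegularLang R → L ∩ R ∈ C n

/-- Closure under (binary) union. -/
def ClosedUnderUnion (C : LangClass) : Prop :=
  ∀ (n : ℕ), ∀ L₁ ∈ C n, ∀ L₂ ∈ C n, L₁ ∪ L₂ ∈ C n

/-- A cone: a class of languages closed under homomorphisms, inverse homomorphisms,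
and intersection with regular languages. -/
def IsCone (C : LangClass) : Prop :=
  ClosedUnderHom C ∧ ClosedUnderInvHom C ∧ ClosedUnderInterReg C

/-- A full semi-AFL: a cone closed under union. -/
def IsFullSemiAFL (C : LangClass) : Prop :=
  IsCone C ∧ ClosedUnderUnion C

/-- `G` is `C^∀`-flat as a group: for every finitely generated subgroup `H ≤ G`
(presented by a finite monoid generating map `ρ`), a subset of `H` is a `C^∀`-subset
of `G` iff it is a `C^∀`-subset of `H`; i.e. `C^∀(G | H) = C^∀(H)`. -/
def GroupCForallFlat (C : LangClass) (G : Type) [Group G] : Prop :=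
  ∀ (H : Subgroup G) (n k : ℕ) (π : List (Fin n) → G) (ρ : List (Fin k) → ↥H),
    FreeHomOnto G π → FreeHomOnto (↥H) ρ →
      ∀ X : Set G, X ⊆ (H : Set G) →
        (CForall C π X ↔ CForall C ρ (Subtype.val ⁻¹' X))

/-- `G` is `C^∃`-flat as a group: for every finitely generated subgroup `H ≤ G`,
a subset of `H` is a `C^∃`-subset of `G` iff it is a `C^∃`-subset of `H`;
i.e. `C^∃(G | H) = C^∃(H)`. -/
def GroupCExistsFlat (C : LangClass) (G : Type) [Group G] : Prop :=
  ∀ (H : Subgroup G) (n k : ℕ) (π : List (Fin n) → G) (ρ : List (Fin k) → ↥H),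
    FreeHomOnto G π → FreeHomOnto (↥H) ρ →
      ∀ X : Set G, X ⊆ (H : Set G) →
        (CExists C π X ↔ CExists C ρ (Subtype.val ⁻¹' X))

/-- `M` is `C^∀`-flat as a monoid: for every finitely generated submonoid `N ≤ M`,
a subset of `N` is a `C^∀`-subset of `M` iff it is a `C^∀`-subset of `N`;
i.e. `C^∀(M | N) = C^∀(N)`. -/
def MonoidCForallFlat (C : LangClass) (M : Type) [Monoid M] : Prop :=
  ∀ (N : Submonoid M) (n k : ℕ) (π : List (Fin n) → M) (ρ : List (Fin k) → ↥N),
    FreeHomOnto M π → FreeHomOnto (↥N) ρ →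
      ∀ X : Set M, X ⊆ (N : Set M) →
        (CForall C π X ↔ CForall C ρ (Subtype.val ⁻¹' X))

/-- `M` is `C^∃`-flat as a monoid: for every finitely generated submonoid `N ≤ M`,
a subset of `N` is a `C^∃`-subset of `M` iff it is a `C^∃`-subset of `N`;
i.e. `C^∃(M | N) = C^∃(N)`. -/
def MonoidCExistsFlat (C : LangClass) (M : Type) [Monoid M] : Prop :=
  ∀ (N : Submonoid M) (n k : ℕ) (π : List (Fin n) → M) (ρ : List (Fin k) → ↥N),
    FreeHomOnto M π → FreeHomOnto (↥N) ρ →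
      ∀ X : Set M, X ⊆ (N : Set M) →
        (CExists C π X ↔ CExists C ρ (Subtype.val ⁻¹' X))
/-- The class `RE` of recursively enumerable languages over finite alphabets. -/
def REClass : LangClass := fun n => {L | REPred (fun w : List (Fin n) => w ∈ L)}

theorem wp_transfer {G : Type} [Group G] {n m : ℕ} {π : List (Fin n) → G}
    (hπ : FreeHomOnto G π) (hre : REPred fun w : List (Fin n) => π w = 1)
    {π' : List (Fin m) → G} (hπ' : FreeHomOnto G π') :
    REPred fun w : List (Fin m) => π' w = 1 := by
  choose φ hφ using fun a : Fin m => hπ.surjective (π' [a])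
  have key := hom_flatMap hπ.map_nil hπ.map_append hπ'.map_nil hπ'.map_append
      (f := φ) (fun b => (hφ b).symm)
  exact (hre.compC (computable_flatMap φ)).of_eq fun w => by rw [key w]





/-- A finitely generated group `G` is `RE^∀`-flat as a group iff the
word problem of `G` is recursively enumerable, i.e. `π⁻¹(1)` is recursively enumerable
(equivalently, `G` is recursively presented). -/
theorem stmt19 {G : Type} [Group G] {n : ℕ}
    (π : List (Fin n) → G) (hπ : FreeHomOnto G π) :
    GroupCForallFlat REClass G ↔ REPred (fun w : List (Fin n) => π w = 1) := by
  constructor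
  · intro hflat
    have hρ : FreeHomOnto (↥(⊥ : Subgroup G)) (fun _ : List (Fin 0) => 1) :=
      ⟨rfl, fun _ _ => (one_mul 1).symm, fun x => ⟨[], Subsingleton.elim _ _⟩⟩
    have h := hflat ⊥ n 0 π (fun _ => 1) hπ hρ {1} (by simp)
    have h2 : CForall REClass (fun _ : List (Fin 0) => (1 : ↥(⊥ : Subgroup G)))
        (Subtype.val ⁻¹' {1}) := by
      show REPred fun v : List (Fin 0) =>
        (1 : ↥(⊥ : Subgroup G)) ∈ Subtype.val ⁻¹' ({1} : Set G)
      exact REPred.true'.of_eq fun v => by simp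
    have h3 : REPred fun w : List (Fin n) => π w ∈ ({1} : Set G) := h.2 h2
    exact h3.of_eq fun w => by simp
  · intro hre H n' k π' ρ hπ' hρ X hX
    choose ψ hψ using fun b : Fin k => hπ'.surjective ((ρ [b] : ↥H) : G)
    have hval : ∀ v : List (Fin k), ((ρ v : ↥H) : G) = π' (v.flatMap ψ) :=
      hom_flatMap hπ'.map_nil hπ'.map_append
        (by rw [hρ.map_nil]; simp)
        (fun u v => by rw [hρ.map_append]; simp)
        (fun b => (hψ b).symm)
    constructor
    · intro hCF
      have hCF : REPred fun w : List (Fin n') => π' w ∈ X := hCF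
      show REPred fun v : List (Fin k) => ((ρ v : ↥H) : G) ∈ X
      exact (hCF.compC (computable_flatMap ψ)).of_eq fun v => by rw [hval v]
    · intro hCF'
      have hCF' : REPred fun v : List (Fin k) => ((ρ v : ↥H) : G) ∈ X := hCF'
      choose ι hι using fun a : Fin n' => hπ'.surjective ((π' [a])⁻¹)
      have hinv := hom_inv hπ'.map_nil hπ'.map_append (ι := ι) hι
      have wp' : REPred fun w : List (Fin n') => π' w = 1 := wp_transfer hπ hre hπ'
      have hcomp : Computable fun x : List (Fin n') × List (Fin k) =>
          x.1.reverse.flatMap ι ++ x.2.flatMap ψ := by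
        apply Primrec.to_comp
        exact Primrec.list_append.comp
          (Primrec.list_flatMap (Primrec.list_reverse.comp Primrec.fst)
            ((Primrec.dom_finite ι).comp Primrec.snd).to₂)
          (Primrec.list_flatMap Primrec.snd ((Primrec.dom_finite ψ).comp Primrec.snd).to₂)
      have hpair : REPred fun x : List (Fin n') × List (Fin k) =>
          (π' (x.1.reverse.flatMap ι ++ x.2.flatMap ψ) = 1) ∧ ((ρ x.2 : ↥H) : G) ∈ X :=
        REPred.and' (wp'.compC hcomp) (hCF'.compC Computable.snd)
      show REPred fun w : List (Fin n') => π' w ∈ X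
      refine (REPred.exists' hpair).of_eq fun w => ?_
      constructor
      · rintro ⟨v, h1, h2⟩
        rw [hπ'.map_append, hinv, ← hval] at h1
        rwa [inv_mul_eq_one.mp h1]
      · intro hw
        obtain ⟨v, hv⟩ := hρ.surjective ⟨π' w, hX hw⟩
        have hv' : ((ρ v : ↥H) : G) = π' w := by rw [hv]
        refine ⟨v, ?_, ?_⟩
        · rw [hπ'.map_append, hinv, ← hval, hv']
          simp
        · rw [hv']; exact hw
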